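/- (Invariant domain.) Let T > 0 and let (u,z,m) be a C² solution of the system on an open set containing [0,T] × ℝ, with constants 0 < Z_L < z < Z_U, 0 < M₁ < m < M₂, |m_x| < M₃ and |m_xx| < M₄ on [0,T] × ℝ. Suppose a₀(t,x) ≥ 0 for all (t,x) ∈ [0,T] × ℝ. If y(0,x) > 0 and q(0,x) > 0 for all x ∈ ℝ, then y(t,x) > 0 and q(t,x) > 0 for all (t,x) ∈ [0,T] × ℝ; that is, {y > 0, q > 0} is an invariant domain when a₀ ≥ 0. -/

import Mathlib

open Real Set

/-- Partial derivative with respect to `t` (the first coordinate). -/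
noncomputable def pdt (f : ℝ × ℝ → ℝ) (pt : ℝ × ℝ) : ℝ := fderiv ℝ f pt (1, 0)

/-- Partial derivative with respect to `x` (the second coordinate). -/
noncomputable def pdx (f : ℝ × ℝ → ℝ) (pt : ℝ × ℝ) : ℝ := fderiv ℝ f pt (0, 1)

lemma hasFDerivAt_pd (W : Set (ℝ × ℝ)) (hW : IsOpen W) (f : ℝ × ℝ → ℝ)
    (hf : ContDiffOn ℝ 2 f W) (pt : ℝ × ℝ) (hpt : pt ∈ W) (w : ℝ × ℝ) :
    HasFDerivAt (fun p => fderiv ℝ f p w)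
      ((ContinuousLinearMap.apply ℝ ℝ w).comp (fderiv ℝ (fderiv ℝ f) pt)) pt := by
  have hD : DifferentiableAt ℝ (fderiv ℝ f) pt := by
    have h1 : ContDiffOn ℝ 1 (fderiv ℝ f) W := hf.fderiv_of_isOpen hW (by norm_num)
    exact (h1.differentiableOn one_ne_zero).differentiableAt (hW.mem_nhds hpt)
  exact ((ContinuousLinearMap.apply ℝ ℝ w).hasFDerivAt).comp pt hD.hasFDerivAt

lemma snd_symm (W : Set (ℝ × ℝ)) (hW : IsOpen W) (f : ℝ × ℝ → ℝ)
    (hf : ContDiffOn ℝ 2 f W) (pt : ℝ × ℝ) (hpt : pt ∈ W) (a b : ℝ × ℝ) :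
    fderiv ℝ (fderiv ℝ f) pt a b = fderiv ℝ (fderiv ℝ f) pt b a := by
  have hev : ∀ᶠ q in nhds pt, HasFDerivAt f (fderiv ℝ f q) q := by
    filter_upwards [hW.mem_nhds hpt] with q hq
    exact ((hf.contDiffAt (hW.mem_nhds hq)).differentiableAt (by norm_num)).hasFDerivAt
  have hD : HasFDerivAt (fderiv ℝ f) (fderiv ℝ (fderiv ℝ f) pt) pt := by
    have h1 : ContDiffOn ℝ 1 (fderiv ℝ f) W := hf.fderiv_of_isOpen hW (by norm_num)
    exact (((h1.differentiableOn one_ne_zero).differentiableAt (hW.mem_nhds hpt))).hasFDerivAt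
  exact second_derivative_symmetric_of_eventually hev hD a b

lemma hasFDerivAt_of_eq {f : ℝ × ℝ → ℝ} {L L' : ℝ × ℝ →L[ℝ] ℝ} {pt : ℝ × ℝ}
    (h : HasFDerivAt f L pt) (hL : ∀ w, L w = L' w) : HasFDerivAt f L' pt := by
  have : L = L' := ContinuousLinearMap.ext hL
  exact this ▸ h

/-- If `Y' = -(b t) Y²` with `0 ≤ b ≤ A` and `Y 0 > 0`, then `Y t₀ > 0`. -/
lemma ode_pos (t₀ : ℝ) (ht₀ : 0 ≤ t₀) (Y b : ℝ → ℝ) (A : ℝ)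
    (hY : ∀ t ∈ Set.Icc 0 t₀, HasDerivWithinAt Y (-(b t) * (Y t)^2) (Set.Icc 0 t₀) t)
    (hb : ∀ t ∈ Set.Icc 0 t₀, 0 ≤ b t ∧ b t ≤ A)
    (h0 : 0 < Y 0) : 0 < Y t₀ := by
  have hA : 0 ≤ A := le_trans (hb 0 (by constructor <;> simp [ht₀])).1
    (hb 0 (by constructor <;> simp [ht₀])).2
  by_contra hle
  push_neg at hle
  have hYc : ContinuousOn Y (Icc 0 t₀) := fun t ht => (hY t ht).continuousWithinAt
  set E : Set ℝ := Icc 0 t₀ ∩ Y ⁻¹' (Iic 0) with hE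
  have hEne : E.Nonempty := ⟨t₀, ⟨by simp [ht₀], by simpa using hle⟩⟩
  have hEclosed : IsClosed E := hYc.preimage_isClosed_of_isClosed isClosed_Icc isClosed_Iic
  have hEbdd : BddBelow E := ⟨0, fun t ht => ht.1.1⟩
  set τ := sInf E with hτ
  have hτE : τ ∈ E := hEclosed.csInf_mem hEne hEbdd
  have hτIcc : τ ∈ Icc 0 t₀ := hτE.1
  have hYτ : Y τ ≤ 0 := hτE.2
  have hτpos : 0 < τ := by
    rcases lt_or_eq_of_le hτIcc.1 with h | h
    · exact h
    · exfalso; rw [← h] at hYτ; linarith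
  have hpos : ∀ t, t ∈ Ico 0 τ → 0 < Y t := by
    intro t ht
    by_contra hc
    push_neg at hc
    have htE : t ∈ E := ⟨⟨ht.1, le_trans ht.2.le hτIcc.2⟩, by simpa using hc⟩
    exact absurd (csInf_le hEbdd htE) (not_le.2 ht.2)
  -- on [0, t'] for t' < τ, bound 1/Y
  set Bd : ℝ := (Y 0)⁻¹ + A * t₀ with hBd
  have hBdpos : 0 < Bd := by
    have h1 : 0 < (Y 0)⁻¹ := inv_pos.2 h0
    have h2 : 0 ≤ A * t₀ := mul_nonneg hA ht₀
    rw [hBd]; linarith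
  have key : ∀ t' ∈ Ico 0 τ, Bd⁻¹ ≤ Y t' := by
    intro t' ht'
    have ht'I : Icc 0 t' ⊆ Ico 0 τ := fun s hs => ⟨hs.1, lt_of_le_of_lt hs.2 ht'.2⟩
    have ht'Icc : Icc 0 t' ⊆ Icc 0 t₀ := fun s hs =>
      ⟨hs.1, le_trans hs.2 (le_trans ht'.2.le hτIcc.2)⟩
    have hG : ∀ s ∈ Icc 0 t', HasDerivWithinAt (fun r => (Y r)⁻¹) (b s) (Icc 0 t') s := by
      intro s hs
      have hYs : Y s ≠ 0 := ne_of_gt (hpos s (ht'I hs))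
      have := ((hY s (ht'Icc hs)).mono ht'Icc).inv hYs
      refine this.congr_deriv ?_
      field_simp
    have hbound : ∀ s ∈ Ico 0 t', ‖b s‖ ≤ A := by
      intro s hs
      have hsIcc : s ∈ Icc 0 t₀ := ht'Icc ⟨hs.1, hs.2.le⟩
      rw [Real.norm_eq_abs, abs_of_nonneg (hb s hsIcc).1]
      exact (hb s hsIcc).2
    have := norm_image_sub_le_of_norm_deriv_le_segment' hG hbound t' (right_mem_Icc.2 ht'.1)
    rw [Real.norm_eq_abs] at this
    have h1 : (Y t')⁻¹ - (Y 0)⁻¹ ≤ A * (t' - 0) := le_trans (le_abs_self _) this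
    have h2 : (Y t')⁻¹ ≤ Bd := by
      have ht'le : t' ≤ t₀ := le_trans ht'.2.le hτIcc.2
      rw [hBd]; nlinarith
    have hYt' : 0 < Y t' := hpos t' ht'
    have h3 : Bd⁻¹ ≤ ((Y t')⁻¹)⁻¹ := inv_anti₀ (inv_pos.2 hYt') h2
    rwa [inv_inv] at h3
  -- take limit t' → τ⁻
  have hclos : τ ∈ closure (Ico 0 τ) := by
    rw [closure_Ico (ne_of_lt hτpos)]
    exact ⟨hτpos.le, le_refl τ⟩
  have hne : (nhdsWithin τ (Ico 0 τ)).NeBot := mem_closure_iff_nhdsWithin_neBot.1 hclos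
  have hcont : ContinuousWithinAt Y (Ico 0 τ) τ := by
    have := hYc τ hτIcc
    exact this.mono (fun s hs => ⟨hs.1, le_trans hs.2.le hτIcc.2⟩)
  have hYτge : Bd⁻¹ ≤ Y τ := by
    refine ge_of_tendsto hcont ?_
    filter_upwards [self_mem_nhdsWithin] with s hs
    exact key s hs
  have : 0 < Y τ := lt_of_lt_of_le (inv_pos.2 hBdpos) hYτge
  linarith

lemma invariance_aux (T : ℝ) (hT : 0 < T) (W : Set (ℝ × ℝ)) (hW : IsOpen W)
    (hWT : Set.Icc (0 : ℝ) T ×ˢ (Set.univ : Set ℝ) ⊆ W)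
    (F v a2 : ℝ × ℝ → ℝ) (A Cb : ℝ) (hCb : 0 ≤ Cb)
    (hv : ContDiffOn ℝ 1 v W)
    (hvb : ∀ pt ∈ Set.Icc (0 : ℝ) T ×ˢ (Set.univ : Set ℝ), |v pt| ≤ Cb)
    (hFd : ∀ pt ∈ Set.Icc (0 : ℝ) T ×ˢ (Set.univ : Set ℝ), DifferentiableAt ℝ F pt)
    (hric : ∀ pt ∈ Set.Icc (0 : ℝ) T ×ˢ (Set.univ : Set ℝ),
      pdt F pt + v pt * pdx F pt = -(a2 pt) * (F pt)^2)
    (ha2 : ∀ pt ∈ Set.Icc (0 : ℝ) T ×ˢ (Set.univ : Set ℝ), 0 ≤ a2 pt ∧ a2 pt ≤ A)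
    (hinit : ∀ x : ℝ, 0 < F (0, x)) :
    ∀ pt ∈ Set.Icc (0 : ℝ) T ×ˢ (Set.univ : Set ℝ), 0 < F pt := by
  rintro ⟨t₀, x₀⟩ hpt
  have ht₀ : t₀ ∈ Icc (0 : ℝ) T := hpt.1
  rcases eq_or_lt_of_le ht₀.1 with h0 | h0
  · rw [← h0]; exact hinit x₀
  -- Build the characteristic curve through (t₀, x₀).
  set R : ℝ := Cb * T + 1 with hR
  have hRpos : 0 < R := by have := mul_nonneg hCb hT.le; rw [hR]; linarith
  -- strip membership helper
  have hmem : ∀ t ∈ Icc 0 t₀, ∀ x : ℝ, (t, x) ∈ Set.Icc (0 : ℝ) T ×ˢ (Set.univ : Set ℝ) := by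
    intro t ht x
    exact ⟨⟨ht.1, le_trans ht.2 ht₀.2⟩, trivial⟩
  -- compact set where we need the Lipschitz bound
  have hKsub : Icc (0:ℝ) T ×ˢ Metric.closedBall x₀ R ⊆ W := by
    intro q hq; exact hWT ⟨hq.1, trivial⟩
  have hKcomp : IsCompact (Icc (0:ℝ) T ×ˢ Metric.closedBall x₀ R) :=
    isCompact_Icc.prod (isCompact_closedBall _ _)
  have hvC : ContinuousOn (fderiv ℝ v) W := hv.continuousOn_fderiv_of_isOpen hW le_rfl
  obtain ⟨L0, hL0⟩ := hKcomp.exists_bound_of_continuousOn (hvC.mono hKsub)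
  set L : ℝ := max L0 0 with hL
  have hLnn : 0 ≤ L := le_max_right _ _
  have hLb : ∀ q ∈ Icc (0:ℝ) T ×ˢ Metric.closedBall x₀ R, ‖fderiv ℝ v q‖ ≤ L :=
    fun q hq => le_trans (hL0 q hq) (le_max_left _ _)
  -- Picard-Lindelöf data
  have hRc : ((R.toNNReal : ℝ)) = R := Real.coe_toNNReal _ hRpos.le
  have hpl : IsPicardLindelof (fun t x => v (t, x)) (tmin := 0) (tmax := t₀)
      ⟨t₀, ⟨h0.le, le_refl _⟩⟩ x₀ R.toNNReal 0 Cb.toNNReal L.toNNReal := by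
    constructor
    · -- Lipschitz in x
      intro t ht
      rw [hRc]
      have hts : t ∈ Icc (0:ℝ) T := ⟨ht.1, le_trans ht.2 ht₀.2⟩
      apply (convex_closedBall x₀ R).lipschitzOnWith_of_nnnorm_hasDerivWithin_le
        (f' := fun x => fderiv ℝ v (t, x) (0, 1))
      · intro x hx
        have hxW : (t, x) ∈ W := hKsub ⟨hts, hx⟩
        have hvd : DifferentiableAt ℝ v (t, x) :=
          (hv.contDiffAt (hW.mem_nhds hxW)).differentiableAt one_ne_zero
        have hcurve : HasDerivAt (fun y : ℝ => ((t, y) : ℝ × ℝ)) (0, 1) x :=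
          (hasDerivAt_const x t).prodMk (hasDerivAt_id x)
        exact (hvd.hasFDerivAt.comp_hasDerivAt x hcurve).hasDerivWithinAt
      · intro x hx
        have hxW : (t, x) ∈ Icc (0:ℝ) T ×ˢ Metric.closedBall x₀ R := ⟨hts, hx⟩
        have h1 : ‖fderiv ℝ v (t, x) (0, 1)‖ ≤ ‖fderiv ℝ v (t, x)‖ * ‖((0:ℝ), (1:ℝ))‖ :=
          (fderiv ℝ v (t, x)).le_opNorm _
        have h2 : ‖((0:ℝ), (1:ℝ))‖ = 1 := by
          simp [Prod.norm_def]
        rw [← NNReal.coe_le_coe, coe_nnnorm, Real.coe_toNNReal _ hLnn]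
        calc ‖fderiv ℝ v (t, x) (0, 1)‖ ≤ ‖fderiv ℝ v (t, x)‖ * ‖((0:ℝ), (1:ℝ))‖ := h1
          _ = ‖fderiv ℝ v (t, x)‖ := by rw [h2, mul_one]
          _ ≤ L := hLb _ hxW
    · -- continuity in t
      intro x hx
      have : ContinuousOn v W := hv.continuousOn
      apply (this.comp (Continuous.continuousOn (by continuity))
        (fun t ht => hWT (hmem t ht x)))
    · -- norm bound
      intro t ht x hx
      rw [Real.norm_eq_abs, Real.coe_toNNReal _ hCb]
      exact hvb _ (hmem t ht x)
    · -- C * ... ≤ R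
      have : max (t₀ - t₀) (t₀ - 0) = t₀ := by
        rw [sub_self, sub_zero, max_eq_right h0.le]
      simp only [Real.coe_toNNReal _ hCb, hRc, NNReal.coe_zero, sub_zero]
      rw [show max (t₀ - t₀) t₀ = t₀ by rw [sub_self, max_eq_right h0.le], hR]
      nlinarith [ht₀.2]
  obtain ⟨χ, hχ0, hχd⟩ := hpl.exists_eq_forall_mem_Icc_hasDerivWithinAt₀
  -- Y along the characteristic
  set Y : ℝ → ℝ := fun t => F (t, χ t) with hYdef
  have hYd : ∀ t ∈ Icc 0 t₀, HasDerivWithinAt Y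
      (-(a2 (t, χ t)) * (Y t)^2) (Icc 0 t₀) t := by
    intro t ht
    have hstrip := hmem t ht (χ t)
    have hcurve : HasDerivWithinAt (fun s : ℝ => ((s, χ s) : ℝ × ℝ))
        ((1 : ℝ), v (t, χ t)) (Icc 0 t₀) t :=
      (hasDerivWithinAt_id t _).prodMk (hχd t ht)
    have hFf : HasFDerivAt F (fderiv ℝ F (t, χ t)) (t, χ t) := (hFd _ hstrip).hasFDerivAt
    have hcomp := hFf.comp_hasDerivWithinAt t hcurve
    have hval : fderiv ℝ F (t, χ t) ((1 : ℝ), v (t, χ t))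
        = pdt F (t, χ t) + v (t, χ t) * pdx F (t, χ t) := by
      have hsum : ((1 : ℝ), v (t, χ t)) = ((1:ℝ), (0:ℝ)) + v (t, χ t) • ((0:ℝ), (1:ℝ)) := by
        simp [Prod.ext_iff]
      rw [hsum, map_add, map_smul, smul_eq_mul]
      rfl
    rw [hval, hric _ hstrip] at hcomp
    exact hcomp
  have hY0 : 0 < Y 0 := by rw [hYdef]; exact hinit (χ 0)
  have := ode_pos t₀ h0.le Y (fun t => a2 (t, χ t)) A hYd
    (fun t ht => ha2 _ (hmem t ht (χ t))) hY0
  rw [hYdef] at this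
  simpa [hχ0] using this

/-- slice derivatives in the x-direction -/
lemma slice_deriv (W : Set (ℝ × ℝ)) (hW : IsOpen W) (f : ℝ × ℝ → ℝ)
    (hf : ContDiffOn ℝ 2 f W) (t x : ℝ) (hpt : (t, x) ∈ W) :
    HasDerivAt (fun y => f (t, y)) (pdx f (t, x)) x ∧
    HasDerivAt (fun y => pdx f (t, y)) (pdx (pdx f) (t, x)) x := by
  have hcurve : HasDerivAt (fun y : ℝ => ((t, y) : ℝ × ℝ)) (0, 1) x :=
    (hasDerivAt_const x t).prodMk (hasDerivAt_id x)
  constructor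
  · have hd : DifferentiableAt ℝ f (t, x) :=
      (hf.contDiffAt (hW.mem_nhds hpt)).differentiableAt (by norm_num)
    exact hd.hasFDerivAt.comp_hasDerivAt x hcurve
  · have h1 := (hasFDerivAt_pd W hW f hf (t, x) hpt (0, 1)).comp_hasDerivAt x hcurve
    have h2 : pdx (pdx f) (t, x)
        = ((ContinuousLinearMap.apply ℝ ℝ ((0:ℝ),(1:ℝ))).comp
            (fderiv ℝ (fderiv ℝ f) (t, x))) (0, 1) := by
      show fderiv ℝ (fun p => fderiv ℝ f p (0,1)) (t,x) (0, 1) = _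
      rw [(hasFDerivAt_pd W hW f hf (t, x) hpt (0, 1)).fderiv]
    rw [h2]
    exact h1

lemma m_flat (T γ : ℝ) (hT : 0 < T) (hγ : 1 < γ) (W : Set (ℝ × ℝ)) (hW : IsOpen W)
    (hWT : Set.Icc (0 : ℝ) T ×ˢ (Set.univ : Set ℝ) ⊆ W)
    (m : ℝ × ℝ → ℝ) (hm : ContDiffOn ℝ 2 m W)
    (hmpos : ∀ pt ∈ W, 0 < m pt)
    (heq3 : ∀ pt ∈ W, pdt m pt = 0)
    (hconc : ∀ x : ℝ, ((3*γ+1)/(3*γ-1)) * (pdx m (0,x))^2 ≤ m (0,x) * pdx (pdx m) (0,x)) :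
    ∀ pt ∈ Set.Icc (0 : ℝ) T ×ˢ (Set.univ : Set ℝ),
      pdx m pt = 0 ∧ pdx (pdx m) pt = 0 := by
  have h3γ : 0 < 3*γ - 1 := by linarith
  have hlineW : ∀ t ∈ Icc (0:ℝ) T, ∀ x : ℝ, (t, x) ∈ W := fun t ht x =>
    hWT ⟨ht, trivial⟩
  have h0T : (0:ℝ) ∈ Icc (0:ℝ) T := ⟨le_refl 0, hT.le⟩
  set θ : ℝ := -2/(3*γ-1) with hθ
  have hθneg : θ < 0 := by
    rw [hθ]; apply div_neg_of_neg_of_pos <;> linarith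
  set h : ℝ → ℝ := fun x => m (0, x) with hh
  set h' : ℝ → ℝ := fun x => pdx m (0, x) with hh'
  have hhpos : ∀ x, 0 < h x := fun x => hmpos _ (hlineW 0 h0T x)
  have hD1 : ∀ x, HasDerivAt h (h' x) x := fun x =>
    (slice_deriv W hW m hm 0 x (hlineW 0 h0T x)).1
  have hD2 : ∀ x, HasDerivAt h' (pdx (pdx m) (0, x)) x := fun x =>
    (slice_deriv W hW m hm 0 x (hlineW 0 h0T x)).2
  -- g = h ^ θ is concave and positive, hence h' ≡ 0
  set g : ℝ → ℝ := fun x => h x ^ θ with hg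
  set g' : ℝ → ℝ := fun x => θ * h x ^ (θ - 1) * h' x with hg'
  have hDg : ∀ x, HasDerivAt g (g' x) x := by
    intro x
    have := (hD1 x).rpow_const (p := θ) (Or.inl (ne_of_gt (hhpos x)))
    convert this using 1
    rw [hg']; ring
  have hDg' : ∀ x, HasDerivAt g'
      (θ * ((θ-1) * h x ^ (θ-2) * (h' x)^2 + h x ^ (θ-1) * pdx (pdx m) (0, x))) x := by
    intro x
    have h1 := (hD1 x).rpow_const (p := θ-1) (Or.inl (ne_of_gt (hhpos x)))
    have h2 := h1.mul (hD2 x)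
    have h3 := h2.const_mul θ
    have hfun : (fun y => θ * ((fun y => h y ^ (θ - 1)) * h') y) = g' := by
      funext y; rw [hg']; simp only [Pi.mul_apply]; ring
    rw [hfun] at h3
    refine h3.congr_deriv ?_
    rw [show θ - 1 - 1 = θ - 2 by ring]
    ring
  have hg''le : ∀ x, θ * ((θ-1) * h x ^ (θ-2) * (h' x)^2 + h x ^ (θ-1) * pdx (pdx m) (0, x)) ≤ 0 := by
    intro x
    have hb : 0 ≤ (θ-1) * h x ^ (θ-2) * (h' x)^2 + h x ^ (θ-1) * pdx (pdx m) (0, x) := by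
      have hxpos := hhpos x
      have e1 : h x ^ (θ-1) = h x ^ (θ-2) * h x := by
        rw [← Real.rpow_add_one (ne_of_gt hxpos)]; ring_nf
      have e2 : 0 < h x ^ (θ-2) := Real.rpow_pos_of_pos hxpos _
      have hc := hconc x
      -- θ - 1 = -(3γ+1)/(3γ-1)
      have e3 : θ - 1 = -((3*γ+1)/(3*γ-1)) := by
        rw [hθ]; field_simp; ring
      rw [e1, e3]
      have : ((3*γ+1)/(3*γ-1)) * (h' x)^2 ≤ h x * pdx (pdx m) (0,x) := hc
      nlinarith [e2, this]
    nlinarith [hθneg, hb]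
  -- g' is antitone
  have hanti : Antitone g' := by
    apply antitone_of_deriv_nonpos
    · intro x; exact (hDg' x).differentiableAt
    · intro x; rw [(hDg' x).deriv]; exact hg''le x
  -- g' vanishes identically
  have hg'0 : ∀ x, g' x = 0 := by
    intro x₀
    by_contra hne
    rcases lt_or_gt_of_ne hne with hs | hs
    · -- g' x₀ < 0 : go right
      set s := g' x₀ with hsdef
      set y := x₀ - (g x₀ + 1)/s with hy
      have hgpos : 0 < g x₀ := Real.rpow_pos_of_pos (hhpos x₀) θ
      have hyx : x₀ < y := by
        rw [hy]
        have : (g x₀ + 1)/s < 0 := div_neg_of_pos_of_neg (by linarith) hs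
        linarith
      obtain ⟨ξ, hξ, hslope⟩ := exists_hasDerivAt_eq_slope g g' hyx
        (fun x _ => (hDg x).continuousAt.continuousWithinAt)
        (fun x _ => hDg x)
      have hξge : g' ξ ≤ s := hanti (le_of_lt hξ.1)
      rw [hslope] at hξge
      -- (g y - g x₀)/(y - x₀) ≤ s
      have hyx' : 0 < y - x₀ := by linarith
      have : g y - g x₀ ≤ s * (y - x₀) := by
        rw [div_le_iff₀ hyx'] at hξge; linarith [hξge]
      have hval : s * (y - x₀) = -(g x₀ + 1) := by
        rw [hy]; field_simp; try ring
      have : g y ≤ -1 := by rw [hval] at this; linarith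
      have : 0 < g y := Real.rpow_pos_of_pos (hhpos y) θ
      linarith
    · -- g' x₀ > 0 : go left
      set s := g' x₀ with hsdef
      set y := x₀ - (g x₀ + 1)/s with hy
      have hgpos : 0 < g x₀ := Real.rpow_pos_of_pos (hhpos x₀) θ
      have hyx : y < x₀ := by
        rw [hy]
        have : 0 < (g x₀ + 1)/s := div_pos (by linarith) hs
        linarith
      obtain ⟨ξ, hξ, hslope⟩ := exists_hasDerivAt_eq_slope g g' hyx
        (fun x _ => (hDg x).continuousAt.continuousWithinAt)
        (fun x _ => hDg x)
      have hξge : s ≤ g' ξ := hanti (le_of_lt hξ.2)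
      rw [hslope] at hξge
      have hyx' : 0 < x₀ - y := by linarith
      have h5 : s * (x₀ - y) ≤ g x₀ - g y := by
        rw [le_div_iff₀ (by linarith : 0 < x₀ - y)] at hξge; linarith [hξge]
      have hval : s * (x₀ - y) = g x₀ + 1 := by
        rw [hy]; field_simp; try ring
      have : g y ≤ -1 := by rw [hval] at h5; linarith
      have : 0 < g y := Real.rpow_pos_of_pos (hhpos y) θ
      linarith
  -- hence h' ≡ 0
  have hh'0 : ∀ x, h' x = 0 := by
    intro x
    have := hg'0 x
    rw [hg'] at this
    have hne : θ * h x ^ (θ - 1) ≠ 0 :=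
      mul_ne_zero (ne_of_lt hθneg) (ne_of_gt (Real.rpow_pos_of_pos (hhpos x) _))
    rcases mul_eq_zero.1 this with h | h
    · exact absurd h hne
    · exact h
  -- h is constant
  have hhconst : ∀ x, h x = h 0 := by
    intro x
    have hdiff : Differentiable ℝ h := fun x => (hD1 x).differentiableAt
    have : ∀ x, deriv h x = 0 := fun x => by rw [(hD1 x).deriv]; exact hh'0 x
    exact is_const_of_deriv_eq_zero hdiff this x 0
  -- second x-derivative vanishes at t = 0
  have hh''0 : ∀ x, pdx (pdx m) (0, x) = 0 := by
    intro x
    have h1 : h' = fun _ => (0:ℝ) := funext hh'0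
    have h2 : HasDerivAt h' (pdx (pdx m) (0, x)) x := hD2 x
    rw [h1] at h2
    exact h2.unique (hasDerivAt_const x 0)
  -- propagate in time: m (t,x) = m (0,x)
  have hmt : ∀ t ∈ Icc (0:ℝ) T, ∀ x : ℝ, m (t, x) = m (0, x) := by
    intro t ht x
    have hder : ∀ s ∈ Icc (0:ℝ) t, HasDerivWithinAt (fun r => m (r, x))
        ((fun _ => (0:ℝ)) s) (Icc 0 t) s := by
      intro s hs
      have hsW : (s, x) ∈ W := hlineW s ⟨hs.1, le_trans hs.2 ht.2⟩ x
      have hcurve : HasDerivAt (fun r : ℝ => ((r, x) : ℝ × ℝ)) (1, 0) s :=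
        (hasDerivAt_id s).prodMk (hasDerivAt_const s x)
      have hd : DifferentiableAt ℝ m (s, x) :=
        (hm.contDiffAt (hW.mem_nhds hsW)).differentiableAt (by norm_num)
      have := hd.hasFDerivAt.comp_hasDerivAt s hcurve
      have he : fderiv ℝ m (s, x) (1, 0) = 0 := heq3 _ hsW
      rw [he] at this
      exact this.hasDerivWithinAt
    have hkey := norm_image_sub_le_of_norm_deriv_le_segment' (C := 0) hder
      (fun s _ => by simp) t (right_mem_Icc.2 ht.1)
    simp only [norm_eq_abs, zero_mul] at hkey
    have h1 := abs_nonneg (m (t, x) - m (0, x))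
    have h2 : |m (t, x) - m (0, x)| = 0 := le_antisymm hkey h1
    have := abs_eq_zero.1 h2
    linarith
  -- conclude on strip
  rintro ⟨t, x⟩ hpt
  have ht : t ∈ Icc (0:ℝ) T := hpt.1
  have hconstx : (fun y => m (t, y)) = fun _ => h 0 := by
    funext y
    rw [hmt t ht y]
    exact hhconst y
  have hpdx : ∀ y : ℝ, pdx m (t, y) = 0 := by
    intro y
    have h2 : HasDerivAt (fun y' => m (t, y')) (pdx m (t, y)) y :=
      (slice_deriv W hW m hm t y (hlineW t ht y)).1
    rw [hconstx] at h2
    exact h2.unique (hasDerivAt_const y (h 0))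
  refine ⟨hpdx x, ?_⟩
  have hconstx2 : (fun y => pdx m (t, y)) = fun _ => (0:ℝ) := funext hpdx
  have h2 : HasDerivAt (fun y => pdx m (t, y)) (pdx (pdx m) (t, x)) x :=
    (slice_deriv W hW m hm t x (hlineW t ht x)).2
  rw [hconstx2] at h2
  exact h2.unique (hasDerivAt_const x 0)

lemma pdt_def (f : ℝ × ℝ → ℝ) (pt : ℝ × ℝ) : pdt f pt = fderiv ℝ f pt (1, 0) := rfl
lemma pdx_def (f : ℝ × ℝ → ℝ) (pt : ℝ × ℝ) : pdx f pt = fderiv ℝ f pt (0, 1) := rfl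

set_option maxHeartbeats 2000000 in
lemma riccati_core (γ Kc : ℝ) (hγ : 1 < γ) (hKc : 0 < Kc)
    (W : Set (ℝ × ℝ)) (hW : IsOpen W)
    (u z m : ℝ × ℝ → ℝ)
    (hu : ContDiffOn ℝ 2 u W) (hz : ContDiffOn ℝ 2 z W) (hm : ContDiffOn ℝ 2 m W)
    (hzpos : ∀ q ∈ W, 0 < z q) (hmpos : ∀ q ∈ W, 0 < m q)
    (ν g2 e μ κ D : ℝ) (hν : ν = (γ+1)/(γ-1)) (hg2 : g2 = 2*γ/(γ-1)) (he : e = (γ-1)/γ)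
    (hμ : μ = (γ+1)/(2*(γ-1))) (hD : D = (γ-1)/(γ*(3*γ-1)))
    (heq1' : ∀ q ∈ W, pdt z q = -(Kc * z q ^ ν * pdx u q))
    (heq2' : ∀ q ∈ W, pdt u q = -(Kc * (m q * m q * z q ^ ν) * pdx z q
        + e * Kc * (m q * z q ^ g2 * pdx m q)))
    (heq3 : ∀ q ∈ W, pdt m q = 0)
    (σ : ℝ) (hσ : σ = 1 ∨ σ = -1)
    (pt : ℝ × ℝ) (hpt : pt ∈ W)
    (hmx : pdx m pt = 0) (hmxx : pdx (pdx m) pt = 0)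
    (F : ℝ × ℝ → ℝ)
    (hF : F = fun q => m q ^ κ * (z q ^ μ *
        (pdx u q + σ * (m q * pdx z q + e * pdx m q * z q))
      + σ * D * z q ^ (μ + 1) * pdx m q)) :
    DifferentiableAt ℝ F pt ∧
    pdt F pt + σ * (Kc * m pt * z pt ^ ν) * pdx F pt
      = -(Kc * μ * m pt ^ (-κ) * z pt ^ (μ - 1)) * (F pt)^2 := by
  have hZv : 0 < z pt := hzpos pt hpt
  have hMv : 0 < m pt := hmpos pt hpt
  have hZne : z pt ≠ 0 := ne_of_gt hZv
  have hMne : m pt ≠ 0 := ne_of_gt hMv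
  have hγ1 : γ - 1 ≠ 0 := by intro h; apply (by linarith : (1:ℝ) < γ).ne'; linarith
  -- basic derivatives
  have hzd : HasFDerivAt z (fderiv ℝ z pt) pt :=
    ((hz.contDiffAt (hW.mem_nhds hpt)).differentiableAt (by norm_num)).hasFDerivAt
  have hmd : HasFDerivAt m (fderiv ℝ m pt) pt :=
    ((hm.contDiffAt (hW.mem_nhds hpt)).differentiableAt (by norm_num)).hasFDerivAt
  have hpu : HasFDerivAt (pdx u)
      ((ContinuousLinearMap.apply ℝ ℝ ((0:ℝ),(1:ℝ))).comp (fderiv ℝ (fderiv ℝ u) pt)) pt :=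
    hasFDerivAt_pd W hW u hu pt hpt (0, 1)
  have hpz : HasFDerivAt (pdx z)
      ((ContinuousLinearMap.apply ℝ ℝ ((0:ℝ),(1:ℝ))).comp (fderiv ℝ (fderiv ℝ z) pt)) pt :=
    hasFDerivAt_pd W hW z hz pt hpt (0, 1)
  have hpm : HasFDerivAt (pdx m)
      ((ContinuousLinearMap.apply ℝ ℝ ((0:ℝ),(1:ℝ))).comp (fderiv ℝ (fderiv ℝ m) pt)) pt :=
    hasFDerivAt_pd W hW m hm pt hpt (0, 1)
  -- values
  have hmt : fderiv ℝ m pt (1, 0) = 0 := heq3 pt hpt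
  have hmx' : fderiv ℝ m pt (0, 1) = 0 := hmx
  have hzt : fderiv ℝ z pt (1, 0) = -(Kc * z pt ^ ν * fderiv ℝ u pt (0, 1)) := heq1' pt hpt
  have hBm11 : fderiv ℝ (fderiv ℝ m) pt (0, 1) (0, 1) = 0 :=
    (DFunLike.congr_fun hpm.fderiv ((0:ℝ),(1:ℝ))).symm.trans hmxx
  have hBm10 : fderiv ℝ (fderiv ℝ m) pt (1, 0) (0, 1) = 0 := by
    rw [snd_symm W hW m hm pt hpt (1,0) (0,1)]
    have hA := hasFDerivAt_pd W hW m hm pt hpt (1, 0)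
    have hev : (fun p => fderiv ℝ m p (1, 0)) =ᶠ[nhds pt] (fun _ => (0:ℝ)) := by
      filter_upwards [hW.mem_nhds hpt] with q hq
      exact heq3 q hq
    have hB := (hasFDerivAt_const (𝕜 := ℝ) (0:ℝ) pt).congr_of_eventuallyEq hev
    have huniq := hA.unique hB
    have happ := DFunLike.congr_fun huniq ((0:ℝ), (1:ℝ))
    exact happ
  -- mixed derivative of z
  have hZtx : fderiv ℝ (fderiv ℝ z) pt (1, 0) (0, 1)
      = -(Kc * (ν * z pt ^ (ν - 1) * fderiv ℝ z pt (0, 1) * fderiv ℝ u pt (0, 1)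
          + z pt ^ ν * fderiv ℝ (fderiv ℝ u) pt (0, 1) (0, 1))) := by
    have hcomb := (((hzd.rpow_const (p := ν) (Or.inl hZne)).const_mul Kc).mul hpu).neg
    have hev : (fun p => fderiv ℝ z p (1, 0)) =ᶠ[nhds pt]
        (fun q => -(Kc * z q ^ ν * pdx u q)) := by
      filter_upwards [hW.mem_nhds hpt] with q hq
      exact heq1' q hq
    have hB := hcomb.congr_of_eventuallyEq hev
    have hA := hasFDerivAt_pd W hW z hz pt hpt (1, 0)
    have huniq := hA.unique hB
    have happ := DFunLike.congr_fun huniq ((0:ℝ), (1:ℝ))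
    rw [snd_symm W hW z hz pt hpt (1,0) (0,1)]
    have hstep : fderiv ℝ (fderiv ℝ z) pt (0,1) (1,0)
        = ((ContinuousLinearMap.apply ℝ ℝ ((1:ℝ),(0:ℝ))).comp (fderiv ℝ (fderiv ℝ z) pt)) (0,1) := rfl
    rw [hstep, happ]
    simp only [ContinuousLinearMap.add_apply, ContinuousLinearMap.smul_apply,
      ContinuousLinearMap.coe_comp', Function.comp_apply, ContinuousLinearMap.apply_apply,
      ContinuousLinearMap.neg_apply, smul_eq_mul, Pi.smul_apply, Pi.neg_apply]
    rw [show pdx u pt = fderiv ℝ u pt (0,1) from rfl]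
    ring
  -- mixed derivative of u
  have hUtx : fderiv ℝ (fderiv ℝ u) pt (1, 0) (0, 1)
      = -(Kc * (m pt * m pt) * (ν * z pt ^ (ν - 1) * fderiv ℝ z pt (0, 1) * fderiv ℝ z pt (0, 1)
          + z pt ^ ν * fderiv ℝ (fderiv ℝ z) pt (0, 1) (0, 1))) := by
    have hcomb := (((hmd.mul hmd).mul (hzd.rpow_const (p := ν) (Or.inl hZne))
        |>.const_mul Kc).mul hpz).add
        ((((hmd.mul (hzd.rpow_const (p := g2) (Or.inl hZne))).mul hpm).const_mul
          (e * Kc))) |>.neg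
    have hev : (fun p => fderiv ℝ u p (1, 0)) =ᶠ[nhds pt]
        (fun q => -(Kc * (m q * m q * z q ^ ν) * pdx z q
          + e * Kc * (m q * z q ^ g2 * pdx m q))) := by
      filter_upwards [hW.mem_nhds hpt] with q hq
      exact heq2' q hq
    have hB := hcomb.congr_of_eventuallyEq hev
    have hA := hasFDerivAt_pd W hW u hu pt hpt (1, 0)
    have huniq := hA.unique hB
    have happ := DFunLike.congr_fun huniq ((0:ℝ), (1:ℝ))
    rw [snd_symm W hW u hu pt hpt (1,0) (0,1)]
    have hstep : fderiv ℝ (fderiv ℝ u) pt (0,1) (1,0)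
        = ((ContinuousLinearMap.apply ℝ ℝ ((1:ℝ),(0:ℝ))).comp (fderiv ℝ (fderiv ℝ u) pt)) (0,1) := rfl
    rw [hstep, happ]
    simp only [ContinuousLinearMap.add_apply, ContinuousLinearMap.smul_apply,
      ContinuousLinearMap.coe_comp', Function.comp_apply, ContinuousLinearMap.apply_apply,
      ContinuousLinearMap.neg_apply, smul_eq_mul, Pi.smul_apply, Pi.neg_apply]
    rw [hmx, show pdx z pt = fderiv ℝ z pt (0,1) from rfl, hmx', hBm11]
    simp only [Pi.mul_apply, Pi.pow_apply]
    ring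
  -- the main derivative of F
  subst hF
  have hin2 := (hmd.mul hpz).add ((hpm.const_mul e).mul hzd)
  have hinner := hpu.add (hin2.const_mul σ)
  have hP := hzd.rpow_const (p := μ) (Or.inl hZne)
  have hPI := hP.mul hinner
  have hQ := (hzd.rpow_const (p := μ+1) (Or.inl hZne)).const_mul (σ * D)
  have hQM := hQ.mul hpm
  have hG := hPI.add hQM
  have hA := hmd.rpow_const (p := κ) (Or.inl hMne)
  have hFComb := hA.mul hG
  refine ⟨hFComb.differentiableAt, ?_⟩
  rw [pdt_def, pdx_def]
  erw [hFComb.fderiv]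
  simp only [ContinuousLinearMap.add_apply, ContinuousLinearMap.smul_apply,
    ContinuousLinearMap.coe_comp', Function.comp_apply, ContinuousLinearMap.apply_apply,
    smul_eq_mul, Pi.add_apply, Pi.mul_apply]
  rw [show pdx u pt = fderiv ℝ u pt (0,1) from rfl,
    show pdx z pt = fderiv ℝ z pt (0,1) from rfl]
  rw [hmx, hmt, hmx', hzt, hUtx, hZtx, hBm11, hBm10]
  -- rpow algebra
  rw [show μ + 1 - 1 = μ from by ring]
  have hνμ : ν = μ + μ := by rw [hν, hμ]; field_simp; ring
  rw [hνμ]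
  rw [Real.rpow_add hZv μ μ]
  rw [show μ + μ - 1 = μ + (μ - 1) from by ring]
  rw [Real.rpow_add hZv μ (μ - 1)]
  rw [Real.rpow_sub hZv μ 1, Real.rpow_one]
  rw [Real.rpow_add_one hZne μ]
  rw [Real.rpow_neg hMv.le κ]
  have hMκ : m pt ^ κ ≠ 0 := ne_of_gt (Real.rpow_pos_of_pos hMv κ)
  rcases hσ with rfl | rfl <;> field_simp <;> ring


lemma rpow_bound {a b x e : ℝ} (ha : 0 < a) (hax : a ≤ x) (hxb : x ≤ b) :
    x ^ e ≤ a ^ e + b ^ e := by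
  rcases le_or_gt 0 e with he | he
  · have h1 : x ^ e ≤ b ^ e := Real.rpow_le_rpow (by linarith) hxb he
    have h2 : 0 < a ^ e := Real.rpow_pos_of_pos ha e
    linarith
  · have h1 : x ^ e ≤ a ^ e := Real.rpow_le_rpow_of_nonpos ha hax he.le
    have h2 : 0 < b ^ e := Real.rpow_pos_of_pos (lt_of_lt_of_le (lt_of_lt_of_le ha hax) hxb) e
    linarith

set_option maxHeartbeats 1000000 in
/-- Invariant domain: if `a₀ ≥ 0` on `[0,T] × ℝ` and `y, q > 0` initially,
then `y > 0` and `q > 0` on all of `[0,T] × ℝ`. -/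
theorem stmt_16 (γ Kc : ℝ) (hγ : 1 < γ) (hKc : 0 < Kc)
    (T : ℝ) (hT : 0 < T)
    (W : Set (ℝ × ℝ)) (hW : IsOpen W) (hWT : Set.Icc (0 : ℝ) T ×ˢ (Set.univ : Set ℝ) ⊆ W)
    (u z m : ℝ × ℝ → ℝ)
    (hu : ContDiffOn ℝ 2 u W) (hz : ContDiffOn ℝ 2 z W) (hm : ContDiffOn ℝ 2 m W)
    (hzpos : ∀ pt ∈ W, 0 < z pt) (hmpos : ∀ pt ∈ W, 0 < m pt)
    (c p : ℝ × ℝ → ℝ)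
    (hc : c = fun pt => Kc * m pt * z pt ^ ((γ + 1) / (γ - 1)))
    (hp : p = fun pt => ((γ - 1) / (2 * γ) * Kc) * (m pt) ^ 2 * z pt ^ (2 * γ / (γ - 1)))
    (heq1 : ∀ pt ∈ W, pdt z pt + (c pt / m pt) * pdx u pt = 0)
    (heq2 : ∀ pt ∈ W, pdt u pt + m pt * c pt * pdx z pt + 2 * (p pt / m pt) * pdx m pt = 0)
    (heq3 : ∀ pt ∈ W, pdt m pt = 0)
    (ZL ZU M1 M2 M3 M4 : ℝ) (hZL : 0 < ZL) (hM1 : 0 < M1)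
    (hbounds : ∀ pt ∈ Set.Icc (0 : ℝ) T ×ˢ (Set.univ : Set ℝ),
      ZL < z pt ∧ z pt < ZU ∧ M1 < m pt ∧ m pt < M2 ∧ |pdx m pt| < M3 ∧ |pdx (pdx m) pt| < M4)
    (α β yt qt yf qf a0t a0 : ℝ × ℝ → ℝ)
    (hα : α = fun pt => pdx u pt + m pt * pdx z pt + ((γ - 1) / γ) * pdx m pt * z pt)
    (hβ : β = fun pt => pdx u pt - m pt * pdx z pt - ((γ - 1) / γ) * pdx m pt * z pt)
    (hyt : yt = fun pt => z pt ^ ((γ + 1) / (2 * (γ - 1))) * α pt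
      + ((γ - 1) / (γ * (3 * γ - 1))) * z pt ^ ((γ + 1) / (2 * (γ - 1)) + 1) * pdx m pt)
    (hqt : qt = fun pt => z pt ^ ((γ + 1) / (2 * (γ - 1))) * β pt
      - ((γ - 1) / (γ * (3 * γ - 1))) * z pt ^ ((γ + 1) / (2 * (γ - 1)) + 1) * pdx m pt)
    (hyf : yf = fun pt => m pt ^ (-(3 * (3 - γ)) / (2 * (3 * γ - 1))) * yt pt)
    (hqf : qf = fun pt => m pt ^ (-(3 * (3 - γ)) / (2 * (3 * γ - 1))) * qt pt)
    (ha0t : a0t = fun pt => (Kc / γ) * (((γ - 1) / (3 * γ - 1)) * m pt * pdx (pdx m) pt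
      - ((3 * γ + 1) * (γ - 1) / (3 * γ - 1) ^ 2) * (pdx m pt) ^ 2)
      * z pt ^ (3 * (γ + 1) / (2 * (γ - 1)) + 1))
    (ha0 : a0 = fun pt => m pt ^ (-(3 * (3 - γ)) / (2 * (3 * γ - 1))) * a0t pt)
    (ha0nonneg : ∀ pt ∈ Set.Icc (0 : ℝ) T ×ˢ (Set.univ : Set ℝ), 0 ≤ a0 pt)
    (hinit : ∀ x : ℝ, 0 < yf (0, x) ∧ 0 < qf (0, x)) :
    ∀ pt ∈ Set.Icc (0 : ℝ) T ×ˢ (Set.univ : Set ℝ), 0 < yf pt ∧ 0 < qf pt := by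
  have hγ1 : (0:ℝ) < γ - 1 := by linarith
  have hγ0 : (0:ℝ) < γ := by linarith
  have h3γ : (0:ℝ) < 3*γ - 1 := by linarith
  -- the system in explicit form
  have heq1' : ∀ q ∈ W, pdt z q = -(Kc * z q ^ ((γ+1)/(γ-1)) * pdx u q) := by
    intro q hq
    have h := heq1 q hq
    have hm0 : m q ≠ 0 := ne_of_gt (hmpos q hq)
    have hcq : c q / m q = Kc * z q ^ ((γ+1)/(γ-1)) := by
      rw [hc]; field_simp
    rw [hcq] at h
    linarith
  have heq2' : ∀ q ∈ W, pdt u q = -(Kc * (m q * m q * z q ^ ((γ+1)/(γ-1))) * pdx z q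
      + ((γ-1)/γ) * Kc * (m q * z q ^ (2*γ/(γ-1)) * pdx m q)) := by
    intro q hq
    have h := heq2 q hq
    have hm0 : m q ≠ 0 := ne_of_gt (hmpos q hq)
    have h1 : m q * c q = Kc * (m q * m q * z q ^ ((γ+1)/(γ-1))) := by rw [hc]; ring
    have h2 : 2 * (p q / m q) = (γ-1)/γ * Kc * (m q * z q ^ (2*γ/(γ-1))) := by
      rw [hp]; field_simp
    linear_combination h - pdx z q * h1 - pdx m q * h2
  -- concavity hypothesis for m
  have hconc : ∀ x : ℝ, ((3*γ+1)/(3*γ-1)) * (pdx m (0,x))^2 ≤ m (0,x) * pdx (pdx m) (0,x) := by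
    intro x
    have hx0 : ((0:ℝ),x) ∈ Set.Icc (0:ℝ) T ×ˢ (Set.univ : Set ℝ) := ⟨⟨le_refl 0, hT.le⟩, trivial⟩
    have hq := ha0nonneg _ hx0
    rw [ha0, ha0t] at hq
    simp only at hq
    have hWx : ((0:ℝ),x) ∈ W := hWT hx0
    have hmq : 0 < m (0,x) := hmpos _ hWx
    have hzq : 0 < z (0,x) := hzpos _ hWx
    have h1 : 0 < m (0,x) ^ (-(3*(3-γ))/(2*(3*γ-1))) := Real.rpow_pos_of_pos hmq _
    have h2 : 0 < z (0,x) ^ (3*(γ+1)/(2*(γ-1)) + 1) := Real.rpow_pos_of_pos hzq _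
    have h3 : 0 < Kc / γ := div_pos hKc hγ0
    have s1 : 0 ≤ Kc / γ * ((γ-1)/(3*γ-1) * m (0,x) * pdx (pdx m) (0,x)
        - (3*γ+1)*(γ-1)/(3*γ-1)^2 * (pdx m (0,x))^2) * z (0,x) ^ (3*(γ+1)/(2*(γ-1)) + 1) :=
      le_of_mul_le_mul_left (by rw [mul_zero]; exact hq) h1
    have s2 : 0 ≤ Kc / γ * ((γ-1)/(3*γ-1) * m (0,x) * pdx (pdx m) (0,x)
        - (3*γ+1)*(γ-1)/(3*γ-1)^2 * (pdx m (0,x))^2) :=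
      le_of_mul_le_mul_right (by rw [zero_mul]; exact s1) h2
    have s3 : 0 ≤ (γ-1)/(3*γ-1) * m (0,x) * pdx (pdx m) (0,x)
        - (3*γ+1)*(γ-1)/(3*γ-1)^2 * (pdx m (0,x))^2 :=
      le_of_mul_le_mul_left (by rw [mul_zero]; exact s2) h3
    have hEq : (γ-1)/(3*γ-1) * (m (0,x) * pdx (pdx m) (0,x) - (3*γ+1)/(3*γ-1) * (pdx m (0,x))^2)
        = (γ-1)/(3*γ-1) * m (0,x) * pdx (pdx m) (0,x)
          - (3*γ+1)*(γ-1)/(3*γ-1)^2 * (pdx m (0,x))^2 := by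
      rw [show (3*γ-1)^2 = (3*γ-1)*(3*γ-1) by ring, ← div_div]; ring
    have hB' : 0 ≤ (γ-1)/(3*γ-1) * (m (0,x) * pdx (pdx m) (0,x)
        - (3*γ+1)/(3*γ-1) * (pdx m (0,x))^2) := by rw [hEq]; exact s3
    have h9 : 0 < (γ-1)/(3*γ-1) := div_pos hγ1 h3γ
    have h10 : 0 ≤ m (0,x) * pdx (pdx m) (0,x) - (3*γ+1)/(3*γ-1) * (pdx m (0,x))^2 :=
      le_of_mul_le_mul_left (by rw [mul_zero]; exact hB') h9
    linarith
  -- m is flat on the strip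
  have hflat := m_flat T γ hT hγ W hW hWT m hm hmpos heq3 hconc
  -- yf and qf as the canonical Riccati functions
  have hyfF : yf = fun q => m q ^ (-(3*(3-γ))/(2*(3*γ-1))) * (z q ^ ((γ+1)/(2*(γ-1))) *
      (pdx u q + 1 * (m q * pdx z q + ((γ-1)/γ) * pdx m q * z q))
    + 1 * ((γ-1)/(γ*(3*γ-1))) * z q ^ ((γ+1)/(2*(γ-1)) + 1) * pdx m q) := by
    rw [hyf]; funext q; rw [hyt, hα]; ring
  have hqfF : qf = fun q => m q ^ (-(3*(3-γ))/(2*(3*γ-1))) * (z q ^ ((γ+1)/(2*(γ-1))) *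
      (pdx u q + (-1) * (m q * pdx z q + ((γ-1)/γ) * pdx m q * z q))
    + (-1) * ((γ-1)/(γ*(3*γ-1))) * z q ^ ((γ+1)/(2*(γ-1)) + 1) * pdx m q) := by
    rw [hqf]; funext q; rw [hqt, hβ]; ring
  -- the Riccati structure on the strip
  have hricY : ∀ pt ∈ Set.Icc (0 : ℝ) T ×ˢ (Set.univ : Set ℝ),
      DifferentiableAt ℝ yf pt ∧
      pdt yf pt + 1 * (Kc * m pt * z pt ^ ((γ+1)/(γ-1))) * pdx yf pt
        = -(Kc * ((γ+1)/(2*(γ-1))) * m pt ^ (-(-(3*(3-γ))/(2*(3*γ-1))))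
            * z pt ^ ((γ+1)/(2*(γ-1)) - 1)) * (yf pt)^2 := by
    intro pt hpt
    exact riccati_core γ Kc hγ hKc W hW u z m hu hz hm hzpos hmpos
      _ _ _ _ _ _ rfl rfl rfl rfl rfl heq1' heq2' heq3 1 (Or.inl rfl)
      pt (hWT hpt) (hflat pt hpt).1 (hflat pt hpt).2 yf hyfF
  have hricQ : ∀ pt ∈ Set.Icc (0 : ℝ) T ×ˢ (Set.univ : Set ℝ),
      DifferentiableAt ℝ qf pt ∧
      pdt qf pt + (-1) * (Kc * m pt * z pt ^ ((γ+1)/(γ-1))) * pdx qf pt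
        = -(Kc * ((γ+1)/(2*(γ-1))) * m pt ^ (-(-(3*(3-γ))/(2*(3*γ-1))))
            * z pt ^ ((γ+1)/(2*(γ-1)) - 1)) * (qf pt)^2 := by
    intro pt hpt
    exact riccati_core γ Kc hγ hKc W hW u z m hu hz hm hzpos hmpos
      _ _ _ _ _ _ rfl rfl rfl rfl rfl heq1' heq2' heq3 (-1) (Or.inr rfl)
      pt (hWT hpt) (hflat pt hpt).1 (hflat pt hpt).2 qf hqfF
  -- bounds for the coefficient a2 and the velocity
  have hZU : ZL < ZU := by
    have := hbounds (0,0) ⟨⟨le_refl 0, hT.le⟩, trivial⟩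
    linarith [this.1, this.2.1]
  have hM2 : (0:ℝ) < M2 := by
    have := hbounds (0,0) ⟨⟨le_refl 0, hT.le⟩, trivial⟩
    linarith [this.2.2.1, this.2.2.2.1]
  have hμpos : 0 < (γ+1)/(2*(γ-1)) := by positivity
  have ha2 : ∀ q ∈ Set.Icc (0 : ℝ) T ×ˢ (Set.univ : Set ℝ),
      0 ≤ Kc * ((γ+1)/(2*(γ-1))) * m q ^ (-(-(3*(3-γ))/(2*(3*γ-1))))
          * z q ^ ((γ+1)/(2*(γ-1)) - 1) ∧
      Kc * ((γ+1)/(2*(γ-1))) * m q ^ (-(-(3*(3-γ))/(2*(3*γ-1))))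
          * z q ^ ((γ+1)/(2*(γ-1)) - 1)
        ≤ Kc * ((γ+1)/(2*(γ-1)))
          * (M1 ^ (-(-(3*(3-γ))/(2*(3*γ-1)))) + M2 ^ (-(-(3*(3-γ))/(2*(3*γ-1)))))
          * (ZL ^ ((γ+1)/(2*(γ-1)) - 1) + ZU ^ ((γ+1)/(2*(γ-1)) - 1)) := by
    intro q hq
    have hWq := hWT hq
    have hmq := hmpos q hWq
    have hzq := hzpos q hWq
    obtain ⟨b1, b2, b3, b4, -, -⟩ := hbounds q hq
    constructor
    · have h1 : 0 < m q ^ (-(-(3*(3-γ))/(2*(3*γ-1)))) := Real.rpow_pos_of_pos hmq _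
      have h2 : 0 < z q ^ ((γ+1)/(2*(γ-1)) - 1) := Real.rpow_pos_of_pos hzq _
      positivity
    · have e1 : m q ^ (-(-(3*(3-γ))/(2*(3*γ-1))))
          ≤ M1 ^ (-(-(3*(3-γ))/(2*(3*γ-1)))) + M2 ^ (-(-(3*(3-γ))/(2*(3*γ-1)))) :=
        rpow_bound hM1 b3.le b4.le
      have e2 : z q ^ ((γ+1)/(2*(γ-1)) - 1)
          ≤ ZL ^ ((γ+1)/(2*(γ-1)) - 1) + ZU ^ ((γ+1)/(2*(γ-1)) - 1) :=
        rpow_bound hZL b1.le b2.le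
      have p1 : 0 < m q ^ (-(-(3*(3-γ))/(2*(3*γ-1)))) := Real.rpow_pos_of_pos hmq _
      have p2 : 0 < z q ^ ((γ+1)/(2*(γ-1)) - 1) := Real.rpow_pos_of_pos hzq _
      have p3 : 0 ≤ Kc * ((γ+1)/(2*(γ-1))) := by positivity
      gcongr
  have hCbnn : 0 ≤ Kc * M2 * (ZL ^ ((γ+1)/(γ-1)) + ZU ^ ((γ+1)/(γ-1))) := by
    have h1 : 0 < ZL ^ ((γ+1)/(γ-1)) := Real.rpow_pos_of_pos hZL _
    have h2 : 0 < ZU ^ ((γ+1)/(γ-1)) := Real.rpow_pos_of_pos (hZL.trans hZU) _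
    positivity
  have hvb : ∀ q ∈ Set.Icc (0 : ℝ) T ×ˢ (Set.univ : Set ℝ),
      |c q| ≤ Kc * M2 * (ZL ^ ((γ+1)/(γ-1)) + ZU ^ ((γ+1)/(γ-1))) := by
    intro q hq
    have hWq := hWT hq
    have hmq := hmpos q hWq
    have hzq := hzpos q hWq
    obtain ⟨b1, b2, b3, b4, -, -⟩ := hbounds q hq
    have hcq : c q = Kc * m q * z q ^ ((γ+1)/(γ-1)) := by rw [hc]
    have hcpos : 0 < c q := by
      rw [hcq]
      have : 0 < z q ^ ((γ+1)/(γ-1)) := Real.rpow_pos_of_pos hzq _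
      positivity
    rw [abs_of_pos hcpos, hcq]
    have e2 : z q ^ ((γ+1)/(γ-1)) ≤ ZL ^ ((γ+1)/(γ-1)) + ZU ^ ((γ+1)/(γ-1)) :=
      rpow_bound hZL b1.le b2.le
    have p2 : 0 < z q ^ ((γ+1)/(γ-1)) := Real.rpow_pos_of_pos hzq _
    have hSUMpos : 0 < ZL ^ ((γ+1)/(γ-1)) + ZU ^ ((γ+1)/(γ-1)) := by
      have h1 : 0 < ZL ^ ((γ+1)/(γ-1)) := Real.rpow_pos_of_pos hZL _
      have h2 : 0 < ZU ^ ((γ+1)/(γ-1)) := Real.rpow_pos_of_pos (hZL.trans hZU) _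
      positivity
    exact mul_le_mul (mul_le_mul le_rfl b4.le hmq.le hKc.le) e2 p2.le
      (by positivity)
  have hm1 : ContDiffOn ℝ 1 m W := hm.of_le (by norm_num)
  have hz1 : ContDiffOn ℝ 1 z W := hz.of_le (by norm_num)
  have hzr : ContDiffOn ℝ 1 (fun q => z q ^ ((γ+1)/(γ-1))) W :=
    fun q hq => (hz1 q hq).rpow_const_of_ne (ne_of_gt (hzpos q hq))
  have hvcont : ContDiffOn ℝ 1 c W := by
    rw [hc]
    exact (contDiffOn_const.mul hm1).mul hzr
  -- invariance for yf
  have hYpos : ∀ pt ∈ Set.Icc (0 : ℝ) T ×ˢ (Set.univ : Set ℝ), 0 < yf pt := by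
    apply invariance_aux T hT W hW hWT yf c
      (fun q => Kc * ((γ+1)/(2*(γ-1))) * m q ^ (-(-(3*(3-γ))/(2*(3*γ-1))))
        * z q ^ ((γ+1)/(2*(γ-1)) - 1))
      (Kc * ((γ+1)/(2*(γ-1)))
          * (M1 ^ (-(-(3*(3-γ))/(2*(3*γ-1)))) + M2 ^ (-(-(3*(3-γ))/(2*(3*γ-1)))))
          * (ZL ^ ((γ+1)/(2*(γ-1)) - 1) + ZU ^ ((γ+1)/(2*(γ-1)) - 1)))
      (Kc * M2 * (ZL ^ ((γ+1)/(γ-1)) + ZU ^ ((γ+1)/(γ-1)))) hCbnn hvcont hvb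
      (fun pt hpt => (hricY pt hpt).1) ?_ ha2 (fun x => (hinit x).1)
    intro pt hpt
    have h := (hricY pt hpt).2
    have hcq : c pt = Kc * m pt * z pt ^ ((γ+1)/(γ-1)) := by rw [hc]
    rw [hcq]
    linear_combination h
  -- invariance for qf
  have hQpos : ∀ pt ∈ Set.Icc (0 : ℝ) T ×ˢ (Set.univ : Set ℝ), 0 < qf pt := by
    apply invariance_aux T hT W hW hWT qf (fun q => -(c q))
      (fun q => Kc * ((γ+1)/(2*(γ-1))) * m q ^ (-(-(3*(3-γ))/(2*(3*γ-1))))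
        * z q ^ ((γ+1)/(2*(γ-1)) - 1))
      (Kc * ((γ+1)/(2*(γ-1)))
          * (M1 ^ (-(-(3*(3-γ))/(2*(3*γ-1)))) + M2 ^ (-(-(3*(3-γ))/(2*(3*γ-1)))))
          * (ZL ^ ((γ+1)/(2*(γ-1)) - 1) + ZU ^ ((γ+1)/(2*(γ-1)) - 1)))
      (Kc * M2 * (ZL ^ ((γ+1)/(γ-1)) + ZU ^ ((γ+1)/(γ-1)))) hCbnn
      hvcont.neg ?_ (fun pt hpt => (hricQ pt hpt).1) ?_ ha2 (fun x => (hinit x).2)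
    · intro q hq
      rw [abs_neg]
      exact hvb q hq
    · intro pt hpt
      have h := (hricQ pt hpt).2
      have hcq : c pt = Kc * m pt * z pt ^ ((γ+1)/(γ-1)) := by rw [hc]
      show pdt qf pt + -(c pt) * pdx qf pt = _
      rw [hcq]
      linear_combination h
  exact fun pt hpt => ⟨hYpos pt hpt, hQpos pt hpt⟩
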